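/- Let θ, ψ₁, ψ₂ be real numbers and let Ψ_θ be the ideal shared state. Then the CHSH success probability satisfies S(Ψ_θ) = 1/2 + (1/8)(sin θ (sin ψ₁ + sin ψ₂) + cos ψ₁ − cos ψ₂). -/

import Mathlib

open scoped ComplexInnerProductSpace

/-- Tensor product of two qubit vectors, realized in `EuclideanSpace ℂ (Fin 2 × Fin 2)`. -/
noncomputable def tensor2 (u v : EuclideanSpace ℂ (Fin 2)) :
    EuclideanSpace ℂ (Fin 2 × Fin 2) :=
  WithLp.toLp 2 (fun p => u p.1 * v p.2)

/-- Bob's first-qubit measurement vectors: for input `x = 0` the computational basis,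
for `x = 1` the Hadamard basis. -/
noncomputable def eVec (x a : Fin 2) : EuclideanSpace ℂ (Fin 2) :=
  if x = 0 then WithLp.toLp 2 (fun i => if i = a then 1 else 0)
  else WithLp.toLp 2 (fun i => ((Real.sqrt 2 : ℂ))⁻¹ * (if a = 1 ∧ i = 1 then -1 else 1))

/-- Second-qubit measurement vectors for angle `ψ`. -/
noncomputable def fVec (ψ : ℝ) (b : Fin 2) : EuclideanSpace ℂ (Fin 2) :=
  if b = 0 then WithLp.toLp 2 (fun i => if i = 0 then (Real.cos (ψ / 2) : ℂ) else (Real.sin (ψ / 2) : ℂ))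
  else WithLp.toLp 2 (fun i => if i = 0 then -(Real.sin (ψ / 2) : ℂ) else (Real.cos (ψ / 2) : ℂ))

/-- The CHSH success probability of a two-qubit state `Ψ` for measurement angles
`ψ₁` (input `y = 0`) and `ψ₂` (input `y = 1`). -/
noncomputable def chshS (ψ₁ ψ₂ : ℝ) (Ψ : EuclideanSpace ℂ (Fin 2 × Fin 2)) : ℝ :=
  (1 / 4) * ∑ x : Fin 2, ∑ y : Fin 2, ∑ a : Fin 2, ∑ b : Fin 2,
    if a + b = x * y then
      ‖⟪tensor2 (eVec x a) (fVec (if y = 0 then ψ₁ else ψ₂) b), Ψ⟫‖ ^ 2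
    else 0

/-- The ideal shared state
`(1/√2)(|0⟩|φ₀⟩ + |1⟩|φ₁⟩)`, `|φ₀⟩ = cos(θ/2)|0⟩ + sin(θ/2)|1⟩`,
`|φ₁⟩ = cos(θ/2)|0⟩ − sin(θ/2)|1⟩`. -/
noncomputable def idealState (θ : ℝ) : EuclideanSpace ℂ (Fin 2 × Fin 2) :=
  WithLp.toLp 2 (fun p => ((Real.sqrt 2 : ℂ))⁻¹ *
    (if p.2 = 0 then (Real.cos (θ / 2) : ℂ)
     else if p.1 = 0 then (Real.sin (θ / 2) : ℂ) else -(Real.sin (θ / 2) : ℂ)))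

theorem stmt_5 (θ ψ₁ ψ₂ : ℝ) :
    chshS ψ₁ ψ₂ (idealState θ) =
      1 / 2 + (1 / 8) * (Real.sin θ * (Real.sin ψ₁ + Real.sin ψ₂)
        + Real.cos ψ₁ - Real.cos ψ₂) := by
  have h20 : (2 : Fin 2) = 0 := rfl
  simp only [chshS, idealState, tensor2, eVec, fVec, PiLp.inner_apply, RCLike.inner_apply,
    Fintype.sum_prod_type, Fin.sum_univ_two, Fin.isValue, h20, PiLp.toLp_apply]
  norm_num [map_mul, map_inv₀, Complex.conj_ofReal, -Complex.ofReal_cos, -Complex.ofReal_sin]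
  simp only [Fin.reduceEq, reduceIte, if_true, show (1 + 1 : Fin 2) = 0 from rfl, ← Complex.ofReal_inv, ← Complex.ofReal_mul,
    ← Complex.ofReal_neg, ← Complex.ofReal_add, Complex.norm_real, Real.norm_eq_abs, sq_abs]
  have hq : ((Real.sqrt 2 : ℝ))⁻¹ ^ 2 = 1/2 := by
    rw [inv_pow, Real.sq_sqrt] <;> norm_num
  have hp : Real.cos (θ/2)^2 + Real.sin (θ/2)^2 = 1 := Real.cos_sq_add_sin_sq _
  have hp1 : Real.cos (ψ₁/2)^2 + Real.sin (ψ₁/2)^2 = 1 := Real.cos_sq_add_sin_sq _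
  have hp2 : Real.cos (ψ₂/2)^2 + Real.sin (ψ₂/2)^2 = 1 := Real.cos_sq_add_sin_sq _
  have hst : Real.sin θ = 2 * Real.sin (θ/2) * Real.cos (θ/2) := by
    rw [← Real.sin_two_mul, show 2*(θ/2) = θ by ring]
  have hs1 : Real.sin ψ₁ = 2 * Real.sin (ψ₁/2) * Real.cos (ψ₁/2) := by
    rw [← Real.sin_two_mul, show 2*(ψ₁/2) = ψ₁ by ring]
  have hs2 : Real.sin ψ₂ = 2 * Real.sin (ψ₂/2) * Real.cos (ψ₂/2) := by
    rw [← Real.sin_two_mul, show 2*(ψ₂/2) = ψ₂ by ring]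
  have hc1 : Real.cos ψ₁ = Real.cos (ψ₁/2)^2 - Real.sin (ψ₁/2)^2 := by
    have h := Real.cos_two_mul (ψ₁/2); rw [show 2*(ψ₁/2) = ψ₁ by ring] at h
    rw [h]; linarith [hp1]
  have hc2 : Real.cos ψ₂ = Real.cos (ψ₂/2)^2 - Real.sin (ψ₂/2)^2 := by
    have h := Real.cos_two_mul (ψ₂/2); rw [show 2*(ψ₂/2) = ψ₂ by ring] at h
    rw [h]; linarith [hp2]
  rw [hst, hs1, hs2, hc1, hc2]
  set q : ℝ := (Real.sqrt 2)⁻¹ with hqdef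
  set c := Real.cos (θ/2); set s := Real.sin (θ/2)
  set c1 := Real.cos (ψ₁/2); set s1 := Real.sin (ψ₁/2)
  set c2 := Real.cos (ψ₂/2); set s2 := Real.sin (ψ₂/2)
  linear_combination
    ((( (c^2+s^2)*(c1^2+s1^2) + 4*c*s*c1*s1 + (c^2+s^2)*(c2^2+s2^2) + 4*c*s*c2*s2)/4
      + (q^2+1/2)*(c1^2+s2^2)*(c^2+s^2)) ) * hq
    + (1/4 + (c1^2+s2^2)/4 + (c1^2+s1^2-1)/8 + (c2^2+s2^2-1)/8) * hp
    + (1/4) * hp1 + (1/4) * hp2
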